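/- With t_d(s) defined by 1 - Σ_{d≥1} θ^{d-1} t_d(s) = exp(- Σ_{a≥0} θ^a s_a), the Taylor coefficients at s = 0 are given by ∂^k t_d / (∂s_{a_1} ⋯ ∂s_{a_k}) |_{s=0} = (-1)^{k+1} δ_{d, a_1 + ⋯ + a_k + 1}, for any k ≥ 1 and nonnegative integers a_1, ..., a_k. -/

import Mathlib

noncomputable section
open MvPowerSeries
open scoped Classical

/-- total degree of a monomial -/
def mdeg {σ : Type*} (m : σ →₀ ℕ) : ℕ := m.sum fun _ n => n

/-- formal partial derivative with respect to the variable `i` -/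
def pd {σ : Type*} {R : Type*} [CommRing R] (i : σ) (f : MvPowerSeries σ R) :
    MvPowerSeries σ R :=
  fun m => ((m i + 1 : ℕ) : R) * MvPowerSeries.coeff (m + Finsupp.single i 1) f

/-- formal exponential of a power series (coefficientwise stable sum) -/
def fexp {σ : Type*} {A : Type*} [CommRing A] [Algebra ℚ A] (u : MvPowerSeries σ A) :
    MvPowerSeries σ A :=
  fun m => ∑ k ∈ Finset.range (mdeg m + 1),
    (k.factorial : ℚ)⁻¹ • MvPowerSeries.coeff m (u ^ k)

/-- restriction of a monomial in the variables `θ ⊕ β` to the `β`-variables -/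
def res {β : Type*} (m : (Unit ⊕ β) →₀ ℕ) : β →₀ ℕ :=
  Finsupp.comapDomain Sum.inr m Sum.inr_injective.injOn

/-- the series `1 - ∑_{d ≥ 1} θ^{d-1} t_d` -/
def genT {β : Type*} {R : Type*} [CommRing R] (t : ℕ → MvPowerSeries β R) :
    MvPowerSeries (Unit ⊕ β) R :=
  fun m => (if m = 0 then 1 else 0) -
    MvPowerSeries.coeff (res m) (t (m (Sum.inl ()) + 1))

/-- the series `-∑_{a ≥ 0} θ^a s_a` -/
def expArg : MvPowerSeries (Unit ⊕ ℕ) ℚ :=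
  fun m => ∑ᶠ a : ℕ,
    if m = Finsupp.single (Sum.inl ()) a + Finsupp.single (Sum.inr a) 1 then (-1 : ℚ) else 0

/-- the defining identity `1 - ∑_{d≥1} θ^{d-1} t_d(s) = exp(-∑_{a≥0} θ^a s_a)` -/
def DefIdent (t : ℕ → MvPowerSeries ℕ ℚ) : Prop := genT t = fexp expArg

namespace Aux3

def ee (b : ℕ) : (Unit ⊕ ℕ) →₀ ℕ :=
  Finsupp.single (Sum.inl ()) b + Finsupp.single (Sum.inr b) 1

def nfact {β : Type*} (m : β →₀ ℕ) : ℕ := m.prod fun _ c => c.factorial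

def wd (m : ℕ →₀ ℕ) : ℕ := m.sum fun b c => b * c

lemma res_apply {β : Type*} (m : (Unit ⊕ β) →₀ ℕ) (b : β) : res m b = m (Sum.inr b) := rfl

lemma mdeg_add {σ : Type*} (p q : σ →₀ ℕ) : mdeg (p + q) = mdeg p + mdeg q :=
  Finsupp.sum_add_index' (fun _ => rfl) (fun _ _ _ => rfl)

lemma mdeg_single {σ : Type*} (i : σ) (c : ℕ) : mdeg (Finsupp.single i c) = c :=
  Finsupp.sum_single_index rfl

@[simp] lemma mdeg_zero {σ : Type*} : mdeg (0 : σ →₀ ℕ) = 0 := by simp [mdeg]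

lemma apply_le_mdeg {σ : Type*} (m : σ →₀ ℕ) (x : σ) : m x ≤ mdeg m := by
  by_cases hx : x ∈ m.support
  · exact Finset.single_le_sum (f := fun y => m y) (fun _ _ => Nat.zero_le _) hx
  · simp [Finsupp.notMem_support_iff.mp hx]

lemma wd_add (p q : ℕ →₀ ℕ) : wd (p + q) = wd p + wd q :=
  Finsupp.sum_add_index' (by simp) (fun a b c => Nat.mul_add a b c)

lemma wd_single (i c : ℕ) : wd (Finsupp.single i c) = i * c :=
  Finsupp.sum_single_index (by simp)

@[simp] lemma nfact_zero {β : Type*} : nfact (0 : β →₀ ℕ) = 1 := by simp [nfact]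

lemma nfact_eq_prod {β : Type*} (m : β →₀ ℕ) (S : Finset β) (h : m.support ⊆ S) :
    nfact m = ∏ x ∈ S, (m x).factorial :=
  Finsupp.prod_of_support_subset m h _ (fun _ _ => Nat.factorial_zero)

lemma nfact_add_single_one {β : Type*} (n : β →₀ ℕ) (i : β) :
    nfact (n + Finsupp.single i 1) = (n i + 1) * nfact n := by
  classical
  set S : Finset β := insert i n.support with hS
  have h1 : n.support ⊆ S := Finset.subset_insert _ _
  have h2 : (n + Finsupp.single i 1).support ⊆ S := by
    refine Finsupp.support_add.trans ?_
    apply Finset.union_subset h1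
    refine (Finsupp.support_single_subset).trans ?_
    simp [hS]
  rw [nfact_eq_prod _ S h2, nfact_eq_prod _ S h1,
    ← Finset.mul_prod_erase S _ (Finset.mem_insert_self i _),
    ← Finset.mul_prod_erase S (fun x => (n x).factorial) (Finset.mem_insert_self i _)]
  have h3 : ∀ x ∈ S.erase i, ((n + Finsupp.single i 1 : β →₀ ℕ) x).factorial = (n x).factorial := by
    intro x hx
    have hxi : x ≠ i := (Finset.mem_erase.mp hx).1
    rw [Finsupp.add_apply, Finsupp.single_apply, if_neg (fun h => hxi h.symm), add_zero]
  rw [Finset.prod_congr rfl h3]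
  have h4 : (n + Finsupp.single i 1 : β →₀ ℕ) i = n i + 1 := by
    rw [Finsupp.add_apply, Finsupp.single_eq_same]
  rw [h4, Nat.factorial_succ, mul_assoc]

lemma ee_inl (b : ℕ) : ee b (Sum.inl ()) = b := by
  simp [ee, Finsupp.single_apply]

lemma res_ee (b : ℕ) : res (ee b) = Finsupp.single b 1 := by
  ext c
  simp [res_apply, ee, Finsupp.single_apply]

lemma ee_injective : Function.Injective ee := by
  intro b b' h
  by_contra hne
  have h2 := congrArg (fun m => res m b) h
  simp only [res_ee] at h2
  rw [Finsupp.single_eq_same, Finsupp.single_eq_of_ne' (fun hh => hne hh.symm)] at h2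
  exact one_ne_zero h2

end Aux3

namespace Aux3

lemma expArg_def : expArg = fun n => ∑ᶠ b : ℕ, if n = ee b then (-1 : ℚ) else 0 := rfl

lemma expArg_ee (b : ℕ) : expArg (ee b) = -1 := by
  rw [expArg_def]
  have := finsum_eq_single (fun x => if ee b = ee x then (-1 : ℚ) else 0) b
    (fun x hx => if_neg (fun h => hx (ee_injective h).symm))
  simpa using this

lemma expArg_eq_zero {n : (Unit ⊕ ℕ) →₀ ℕ} (h : ∀ b, n ≠ ee b) : expArg n = 0 := by
  rw [expArg_def]
  have h2 : (fun b => if n = ee b then (-1 : ℚ) else 0) = fun _ => (0 : ℚ) :=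
    funext fun b => if_neg (h b)
  simp only [h2, finsum_zero]

def Bset (n : (Unit ⊕ ℕ) →₀ ℕ) : Finset ℕ :=
  (res n).support.filter fun b => b ≤ n (Sum.inl ())

lemma ee_le {n : (Unit ⊕ ℕ) →₀ ℕ} {b : ℕ} (hb : b ∈ Bset n) : ee b ≤ n := by
  obtain ⟨hs, hle⟩ := Finset.mem_filter.mp hb
  rw [Finsupp.le_def]
  intro x
  rcases x with u | c
  · cases u
    rw [ee_inl]; exact hle
  · have : ee b (Sum.inr c) = Finsupp.single b 1 c := by
      rw [← res_apply, res_ee]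
    rw [this, ← res_apply n c, Finsupp.single_apply]
    rcases eq_or_ne b c with rfl | hbc
    · rw [if_pos rfl]
      exact Nat.one_le_iff_ne_zero.mpr (Finsupp.mem_support_iff.mp hs)
    · rw [if_neg hbc]; exact Nat.zero_le _

lemma coeff_mul_expArg (g : MvPowerSeries (Unit ⊕ ℕ) ℚ) (n : (Unit ⊕ ℕ) →₀ ℕ) :
    MvPowerSeries.coeff n (expArg * g) =
      ∑ b ∈ Bset n, -(MvPowerSeries.coeff (n - ee b) g) := by
  classical
  rw [MvPowerSeries.coeff_mul]
  rw [← Finset.sum_filter_of_ne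
    (p := fun p : ((Unit ⊕ ℕ) →₀ ℕ) × ((Unit ⊕ ℕ) →₀ ℕ) => ∃ b, p.1 = ee b)
    (fun p _ hne => by
      by_contra hno
      exact hne (by
        rw [MvPowerSeries.coeff_apply, expArg_eq_zero (fun b hb => hno ⟨b, hb⟩), zero_mul]))]
  refine Finset.sum_nbij' (i := fun p => p.1 (Sum.inl ())) (j := fun b => (ee b, n - ee b))
    ?_ ?_ ?_ ?_ ?_
  · -- maps into Bset
    intro p hp
    obtain ⟨hmem, b, hb⟩ := Finset.mem_filter.mp hp
    rw [Finset.HasAntidiagonal.mem_antidiagonal] at hmem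
    rw [hb, ee_inl]
    refine Finset.mem_filter.mpr ⟨Finsupp.mem_support_iff.mpr ?_, ?_⟩
    · rw [res_apply, ← hmem, Finsupp.add_apply, hb]
      have : ee b (Sum.inr b) = 1 := by
        rw [← res_apply, res_ee, Finsupp.single_eq_same]
      omega
    · rw [← hmem, Finsupp.add_apply, hb, ee_inl]
      omega
  · -- j maps into filtered antidiagonal
    intro b hb
    refine Finset.mem_filter.mpr ⟨Finset.HasAntidiagonal.mem_antidiagonal.mpr ?_, ⟨b, rfl⟩⟩
    exact add_tsub_cancel_of_le (ee_le hb)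
  · -- left inverse
    intro p hp
    obtain ⟨hmem, b, hb⟩ := Finset.mem_filter.mp hp
    rw [Finset.HasAntidiagonal.mem_antidiagonal] at hmem
    rw [hb, ee_inl]
    refine Prod.ext hb.symm ?_
    show n - ee b = p.2
    rw [← hmem, hb, add_tsub_cancel_left]
  · intro b hb
    simp only [ee_inl]
  · -- values
    intro p hp
    obtain ⟨hmem, b, hb⟩ := Finset.mem_filter.mp hp
    rw [Finset.HasAntidiagonal.mem_antidiagonal] at hmem
    rw [hb, ee_inl, MvPowerSeries.coeff_apply, expArg_ee]
    have h5 : n - ee b = p.2 := by rw [← hmem, hb, add_tsub_cancel_left]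
    rw [h5]
    ring

end Aux3

namespace Aux3

lemma mdeg_eq_sum {σ : Type*} (m : σ →₀ ℕ) : mdeg m = ∑ x ∈ m.support, m x := rfl

lemma wd_eq_sum (m : ℕ →₀ ℕ) : wd m = ∑ x ∈ m.support, x * m x := rfl

lemma coeff_pow_expArg (j : ℕ) (n : (Unit ⊕ ℕ) →₀ ℕ) :
    (nfact (res n) : ℚ) * MvPowerSeries.coeff n (expArg ^ j) =
      (-1) ^ j * j.factorial *
        (if mdeg (res n) = j ∧ n (Sum.inl ()) = wd (res n) then 1 else 0) := by
  induction j generalizing n with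
  | zero =>
    rw [pow_zero, MvPowerSeries.coeff_one]
    rcases eq_or_ne n 0 with rfl | hne
    · have hres0 : res (0 : (Unit ⊕ ℕ) →₀ ℕ) = 0 := by ext c; rw [res_apply]; rfl
      rw [if_pos rfl, hres0, if_pos ⟨mdeg_zero, by simp [wd]⟩]
      simp
    · rw [if_neg hne, mul_zero, if_neg, mul_zero]
      rintro ⟨h1, h2⟩
      apply hne
      have hres0 : res n = 0 := by
        ext c
        have h3 := apply_le_mdeg (res n) c
        simp only [Finsupp.coe_zero, Pi.zero_apply]
        omega
      ext x
      rcases x with u | c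
      · cases u
        rw [h2, hres0]
        simp [wd]
      · rw [← res_apply, hres0]; rfl
  | succ j ih =>
    rw [pow_succ', coeff_mul_expArg, Finset.mul_sum]
    have hterm : ∀ b ∈ Bset n,
        (nfact (res n) : ℚ) * -(MvPowerSeries.coeff (n - ee b) (expArg ^ j)) =
        -((res n b : ℚ) * ((-1) ^ j * j.factorial *
          (if mdeg (res n) = j + 1 ∧ n (Sum.inl ()) = wd (res n) then 1 else 0))) := by
      intro b hb
      obtain ⟨hs, hle⟩ := Finset.mem_filter.mp hb
      have hb1 : 1 ≤ res n b := Nat.one_le_iff_ne_zero.mpr (Finsupp.mem_support_iff.mp hs)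
      have hres : res (n - ee b) = res n - Finsupp.single b 1 := by
        ext c
        rw [res_apply, Finsupp.tsub_apply, Finsupp.tsub_apply, res_apply]
        congr 1
        rw [← res_apply, res_ee]
      have hsplit : (res n - Finsupp.single b 1) + Finsupp.single b 1 = res n :=
        tsub_add_cancel_of_le (Finsupp.single_le_iff.mpr hb1)
      have hnfN : nfact (res n) = res n b * nfact (res n - Finsupp.single b 1) := by
        conv_lhs => rw [← hsplit]
        rw [nfact_add_single_one]
        congr 1
        rw [Finsupp.tsub_apply, Finsupp.single_eq_same]
        omega
      have hnfQ : (nfact (res n) : ℚ) =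
          (res n b : ℚ) * (nfact (res n - Finsupp.single b 1) : ℚ) := by
        rw [hnfN]; push_cast; ring
      have hmdeg2 : mdeg (res n) = mdeg (res n - Finsupp.single b 1) + 1 := by
        conv_lhs => rw [← hsplit]
        rw [mdeg_add, mdeg_single]
      have hwd2 : wd (res n) = wd (res n - Finsupp.single b 1) + b := by
        conv_lhs => rw [← hsplit]
        rw [wd_add, wd_single, mul_one]
      have hinl : (n - ee b) (Sum.inl ()) = n (Sum.inl ()) - b := by
        rw [Finsupp.tsub_apply, ee_inl]
      have hIH := ih (n - ee b)
      rw [hres, hinl] at hIH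
      have hcond : (mdeg (res n - Finsupp.single b 1) = j ∧
          n (Sum.inl ()) - b = wd (res n - Finsupp.single b 1)) ↔
          (mdeg (res n) = j + 1 ∧ n (Sum.inl ()) = wd (res n)) := by
        constructor <;> rintro ⟨h1, h2⟩ <;> constructor <;> omega
      rw [hnfQ]
      calc (res n b : ℚ) * (nfact (res n - Finsupp.single b 1) : ℚ) *
            -(MvPowerSeries.coeff (n - ee b) (expArg ^ j))
          = -((res n b : ℚ) * ((nfact (res n - Finsupp.single b 1) : ℚ) *
              MvPowerSeries.coeff (n - ee b) (expArg ^ j))) := by ring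
        _ = _ := by rw [hIH, if_congr hcond rfl rfl]
    rw [Finset.sum_congr rfl hterm]
    by_cases hc : mdeg (res n) = j + 1 ∧ n (Sum.inl ()) = wd (res n)
    · rw [if_pos hc]
      simp only [if_pos hc, mul_one]
      have hBall : Bset n = (res n).support := by
        rw [Bset, Finset.filter_true_of_mem]
        intro b hbs
        have hb1 : 1 ≤ res n b := Nat.one_le_iff_ne_zero.mpr (Finsupp.mem_support_iff.mp hbs)
        have h6 : b * res n b ≤ ∑ x ∈ (res n).support, x * res n x :=
          Finset.single_le_sum (f := fun x => x * res n x) (fun _ _ => Nat.zero_le _) hbs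
        rw [← wd_eq_sum] at h6
        have h7 : b ≤ b * res n b := Nat.le_mul_of_pos_right b hb1
        omega
      rw [hBall]
      have hsum : ∑ b ∈ (res n).support, (res n b : ℚ) = ((j + 1 : ℕ) : ℚ) := by
        rw [← Nat.cast_sum]
        congr 1
        rw [← mdeg_eq_sum]
        exact hc.1
      have h9 : ∑ b ∈ (res n).support, -((res n b : ℚ) * ((-1) ^ j * (j.factorial : ℚ))) =
          (∑ b ∈ (res n).support, (res n b : ℚ)) * (-((-1) ^ j * (j.factorial : ℚ))) := by
        rw [Finset.sum_mul]
        exact Finset.sum_congr rfl fun b _ => by ring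
      rw [h9, hsum, Nat.factorial_succ]
      push_cast
      ring
    · rw [if_neg hc]
      simp only [if_neg hc, mul_zero, neg_zero, Finset.sum_const_zero]

end Aux3

namespace Aux3

def Ml (l : List ℕ) : ℕ →₀ ℕ := (l.map fun i => Finsupp.single i 1).sum

@[simp] lemma Ml_nil : Ml [] = 0 := rfl

lemma Ml_cons (i : ℕ) (l : List ℕ) : Ml (i :: l) = Finsupp.single i 1 + Ml l := by
  simp [Ml]

lemma mdeg_Ml (l : List ℕ) : mdeg (Ml l) = l.length := by
  induction l with
  | nil => simp
  | cons i l ih =>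
    rw [Ml_cons, mdeg_add, mdeg_single, ih, List.length_cons]
    omega

lemma wd_Ml (l : List ℕ) : wd (Ml l) = l.sum := by
  induction l with
  | nil => simp [wd]
  | cons i l ih => rw [Ml_cons, wd_add, wd_single, mul_one, ih, List.sum_cons]

lemma coeff_foldr_pd (l : List ℕ) (f : MvPowerSeries ℕ ℚ) (n : ℕ →₀ ℕ) :
    (nfact n : ℚ) * MvPowerSeries.coeff n (List.foldr pd f l) =
      (nfact (n + Ml l) : ℚ) * MvPowerSeries.coeff (n + Ml l) f := by
  induction l generalizing n with
  | nil => simp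
  | cons i l ih =>
    have h1 : MvPowerSeries.coeff n (List.foldr pd f (i :: l)) =
        ((n i + 1 : ℕ) : ℚ) *
          MvPowerSeries.coeff (n + Finsupp.single i 1) (List.foldr pd f l) := rfl
    rw [h1, Ml_cons]
    have h2 : n + (Finsupp.single i 1 + Ml l) = (n + Finsupp.single i 1) + Ml l :=
      (add_assoc _ _ _).symm
    rw [h2, ← ih]
    have h3 : (nfact (n + Finsupp.single i 1) : ℚ) = ((n i + 1 : ℕ) : ℚ) * nfact n := by
      rw [nfact_add_single_one]; push_cast; ring
    rw [h3]; ring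

end Aux3


theorem stmt3 (t : ℕ → MvPowerSeries ℕ ℚ) (ht : DefIdent t)
    (k : ℕ) (hk : 1 ≤ k) (a : Fin k → ℕ) (d : ℕ) (hd : 1 ≤ d) :
    MvPowerSeries.constantCoeff (List.foldr pd (t d) (List.ofFn a)) =
      (-1 : ℚ) ^ (k + 1) * (if d = (∑ i, a i) + 1 then 1 else 0) := by
  classical
  set m : ℕ →₀ ℕ := Aux3.Ml (List.ofFn a) with hm
  have hmdeg : mdeg m = k := by rw [hm, Aux3.mdeg_Ml, List.length_ofFn]
  have hwd : Aux3.wd m = ∑ i, a i := by rw [hm, Aux3.wd_Ml, List.sum_ofFn]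
  set m' : (Unit ⊕ ℕ) →₀ ℕ :=
    Finsupp.single (Sum.inl ()) (d - 1) + Finsupp.mapDomain Sum.inr m with hm'
  have hres : res m' = m := by
    ext b
    rw [Aux3.res_apply, hm', Finsupp.add_apply,
      Finsupp.single_apply, if_neg (by simp), zero_add,
      Finsupp.mapDomain_apply Sum.inr_injective]
  have hinl : m' (Sum.inl ()) = d - 1 := by
    rw [hm', Finsupp.add_apply, Finsupp.single_eq_same,
      Finsupp.mapDomain_notin_range _ _ (by simp), add_zero]
  have hm'ne : m' ≠ 0 := by
    intro h0
    have hm0 : m = 0 := by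
      rw [← hres, h0]; ext c; rw [Aux3.res_apply]; rfl
    rw [hm0] at hmdeg
    simp at hmdeg
    omega
  have hkle : k ≤ mdeg m' := by
    rw [hm', Aux3.mdeg_add, Aux3.mdeg_single]
    have hmap : mdeg (Finsupp.mapDomain (Sum.inr : ℕ → Unit ⊕ ℕ) m) = mdeg m := by
      unfold mdeg
      exact Finsupp.sum_mapDomain_index (fun _ => rfl) (fun _ _ _ => rfl)
    omega
  have key := congrFun ht m'
  have hL : genT t m' = -(MvPowerSeries.coeff m (t d)) := by
    have hgen : genT t m' = (if m' = 0 then (1:ℚ) else 0) -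
        MvPowerSeries.coeff (res m') (t (m' (Sum.inl ()) + 1)) := by
      unfold genT
      split_ifs <;> rfl
    rw [hgen, if_neg hm'ne, hres, hinl, zero_sub]
    have hdd : d - 1 + 1 = d := by omega
    rw [hdd]
  have hkf : (k.factorial : ℚ) ≠ 0 := Nat.cast_ne_zero.mpr k.factorial_ne_zero
  have hR : (Aux3.nfact m : ℚ) * fexp expArg m' =
      (-1) ^ k * (if d - 1 = ∑ i, a i then 1 else 0) := by
    have hgen2 : fexp expArg m' = ∑ j ∈ Finset.range (mdeg m' + 1),
        (j.factorial : ℚ)⁻¹ • MvPowerSeries.coeff m' (expArg ^ j) := rfl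
    rw [hgen2, Finset.mul_sum, Finset.sum_eq_single_of_mem k (Finset.mem_range.mpr (by omega))]
    · have hck := Aux3.coeff_pow_expArg k m'
      rw [hres, hinl, hmdeg, hwd] at hck
      simp only [eq_self_iff_true, true_and] at hck
      rw [smul_eq_mul]
      calc (Aux3.nfact m : ℚ) * ((k.factorial : ℚ)⁻¹ * MvPowerSeries.coeff m' (expArg ^ k))
          = (k.factorial : ℚ)⁻¹ *
            ((Aux3.nfact m : ℚ) * MvPowerSeries.coeff m' (expArg ^ k)) := by ring
        _ = (k.factorial : ℚ)⁻¹ * ((-1) ^ k * k.factorial *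
              (if d - 1 = ∑ i, a i then 1 else 0)) := by rw [hck]
        _ = ((k.factorial : ℚ)⁻¹ * k.factorial) *
              ((-1) ^ k * (if d - 1 = ∑ i, a i then 1 else 0)) := by ring
        _ = (-1) ^ k * (if d - 1 = ∑ i, a i then 1 else 0) := by
              rw [inv_mul_cancel₀ hkf, one_mul]
    · intro j hj hjk
      have hcj := Aux3.coeff_pow_expArg j m'
      rw [hres, hinl, hmdeg, hwd] at hcj
      rw [if_neg (by tauto)] at hcj
      rw [smul_eq_mul]
      have h0 : (Aux3.nfact m : ℚ) * MvPowerSeries.coeff m' (expArg ^ j) = 0 := by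
        rw [hcj]; ring
      calc (Aux3.nfact m : ℚ) * ((j.factorial : ℚ)⁻¹ * MvPowerSeries.coeff m' (expArg ^ j))
          = (j.factorial : ℚ)⁻¹ *
            ((Aux3.nfact m : ℚ) * MvPowerSeries.coeff m' (expArg ^ j)) := by ring
        _ = 0 := by rw [h0, mul_zero]
  have key2 : (Aux3.nfact m : ℚ) * genT t m' =
      (-1) ^ k * (if d - 1 = ∑ i, a i then 1 else 0) := by
    rw [key]; exact hR
  rw [hL] at key2
  have key3 : (Aux3.nfact m : ℚ) * MvPowerSeries.coeff m (t d) =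
      -((-1) ^ k * (if d - 1 = ∑ i, a i then 1 else 0)) := by
    rw [← key2]; ring
  have h10 := Aux3.coeff_foldr_pd (List.ofFn a) (t d) 0
  rw [zero_add, ← hm] at h10
  simp only [Aux3.nfact_zero, Nat.cast_one, one_mul] at h10
  have h11 : MvPowerSeries.constantCoeff (List.foldr pd (t d) (List.ofFn a)) =
      MvPowerSeries.coeff 0 (List.foldr pd (t d) (List.ofFn a)) := rfl
  rw [h11, h10, key3]
  have h12 : (d - 1 = ∑ i, a i) = (d = (∑ i, a i) + 1) := propext (by omega)
  simp only [h12]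
  rw [pow_succ]
  ring
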